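/- Let (A, m) be a discrete valuation ring and (R, n) a Noetherian local ring which is flat over A. If R/mR is reduced, then R ⊗_A Q(A) is reduced, where Q(A) is the fraction field of A. -/

import Mathlib

set_option synthInstance.maxHeartbeats 1000000
set_option maxHeartbeats 1000000

open scoped TensorProduct

/-- A localization of a reduced ring is reduced (universe-polymorphic version). -/
theorem aux_isReduced_localization {R : Type*} {S : Type*} [CommRing R] [CommRing S]
    (M : Submonoid R) [Algebra R S] [IsLocalization M S] [IsReduced R] : IsReduced S := by
  constructor
  rintro x ⟨_ | n, e⟩
  · simpa using congr_arg (· * x) e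
  obtain ⟨⟨y, m⟩, hx⟩ := IsLocalization.surj M x
  dsimp only at hx
  let hx' := congr_arg (· ^ n.succ) hx
  simp only [mul_pow, e, zero_mul, ← RingHom.map_pow] at hx'
  rw [← (algebraMap R S).map_zero] at hx'
  obtain ⟨m', hm'⟩ := (IsLocalization.eq_iff_exists M S).mp hx'
  apply_fun (· * (m' : R) ^ n) at hm'
  simp only [mul_assoc, zero_mul, mul_zero] at hm'
  rw [← mul_left_comm, ← pow_succ', ← mul_pow] at hm'
  replace hm' := IsNilpotent.eq_zero ⟨_, hm'.symm⟩
  rw [← (IsLocalization.map_units S m).mul_left_inj, hx, zero_mul,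
    IsLocalization.map_eq_zero_iff M]
  exact ⟨m', by rw [← hm', mul_comm]⟩

/-- The key step: a Noetherian local ring, flat and local over a DVR, with reduced special
fiber, is itself reduced. -/
theorem aux_reduced (A R : Type*) [CommRing A] [IsDomain A] [IsDiscreteValuationRing A]
    [CommRing R] [IsNoetherianRing R] [IsLocalRing R] [Algebra A R] [Module.Flat A R]
    [IsLocalHom (algebraMap A R)]
    (hred : IsReduced (R ⧸ Ideal.map (algebraMap A R) (IsLocalRing.maximalIdeal A))) :
    IsReduced R := by
  classical
  obtain ⟨ϖ, hϖ⟩ := IsDiscreteValuationRing.exists_irreducible A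
  have hϖm : IsLocalRing.maximalIdeal A = Ideal.span {ϖ} :=
    (IsDiscreteValuationRing.irreducible_iff_uniformizer ϖ).mp hϖ
  set π : R := algebraMap A R ϖ with hπdef
  -- the image of the maximal ideal of `A` is `span {π}`
  have hmap : Ideal.map (algebraMap A R) (IsLocalRing.maximalIdeal A) = Ideal.span {π} := by
    rw [hϖm, Ideal.map_span, Set.image_singleton]
  -- `ϖ` acts regularly on `R` by flatness
  have hA : IsSMulRegular A ϖ := by
    intro x y h
    exact mul_left_cancel₀ hϖ.ne_zero (by simpa [smul_eq_mul] using h)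
  have hT : IsSMulRegular (R ⊗[A] A) ϖ := hA.lTensor R
  have hR : IsSMulRegular R ϖ := by
    intro x y h
    have e := TensorProduct.rid A R
    have h' : ϖ • x = ϖ • y := h
    have h2 : ϖ • e.symm x = ϖ • e.symm y := by rw [← map_smul, ← map_smul, h']
    exact e.symm.injective (hT h2)
  have hπpow : ∀ (n : ℕ) (x : R), π ^ n * x = 0 → x = 0 := by
    intro n x h
    have h2 : ϖ ^ n • x = ϖ ^ n • (0 : R) := by
      rw [smul_zero, Algebra.smul_def, map_pow, ← hπdef, h]
    exact hR.pow n h2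
  -- `π` lies in the maximal ideal of `R`
  have hπmem : π ∈ IsLocalRing.maximalIdeal R := by
    rw [IsLocalRing.mem_maximalIdeal, mem_nonunits_iff]
    intro hu
    exact hϖ.not_isUnit (IsLocalHom.map_nonunit (f := algebraMap A R) ϖ hu)
  -- Krull intersection
  have hK : ⨅ i : ℕ, (IsLocalRing.maximalIdeal R) ^ i = ⊥ :=
    Ideal.iInf_pow_eq_bot_of_isLocalRing _ (Ideal.IsMaximal.ne_top inferInstance)
  constructor
  rintro x ⟨n, hn⟩
  by_contra hx0
  have hn0 : n ≠ 0 := by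
    rintro rfl
    rw [pow_zero] at hn
    exact one_ne_zero hn
  have hall : ¬ ∀ ν : ℕ, x ∈ Ideal.span {π} ^ ν := by
    intro h
    apply hx0
    rw [← Ideal.mem_bot, ← hK, Ideal.mem_iInf]
    intro i
    exact Ideal.pow_right_mono (by rwa [Ideal.span_le, Set.singleton_subset_iff]) i (h i)
  have hex : ∃ ν : ℕ, x ∉ Ideal.span {π} ^ ν := not_forall.mp hall
  -- minimal such ν
  have hν0 : Nat.find hex ≠ 0 := by
    intro h
    have := Nat.find_spec hex
    rw [h, pow_zero, Ideal.one_eq_top] at this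
    exact this trivial
  obtain ⟨μ, hμ⟩ := Nat.exists_eq_succ_of_ne_zero hν0
  have hxin : x ∈ Ideal.span {π} ^ μ := by
    by_contra hc
    have := Nat.find_min' hex hc
    omega
  rw [Ideal.span_singleton_pow, Ideal.mem_span_singleton] at hxin
  obtain ⟨u, hu⟩ := hxin
  -- `u ^ n = 0`
  have hun : u ^ n = 0 := by
    apply hπpow (μ * n)
    rw [pow_mul, ← mul_pow, ← hu, hn]
  -- pass to the quotient
  have hu0 : u ∈ Ideal.map (algebraMap A R) (IsLocalRing.maximalIdeal A) := by
    have : (Ideal.Quotient.mk (Ideal.map (algebraMap A R) (IsLocalRing.maximalIdeal A)) u) = 0 := by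
      apply IsReduced.eq_zero (R := R ⧸ _)
      exact ⟨n, by rw [← map_pow, hun, map_zero]⟩
    rwa [Ideal.Quotient.eq_zero_iff_mem] at this
  rw [hmap, Ideal.mem_span_singleton] at hu0
  obtain ⟨v, hv⟩ := hu0
  have hfin : x ∈ Ideal.span {π} ^ Nat.find hex := by
    rw [hμ, Ideal.span_singleton_pow, Ideal.mem_span_singleton]
    exact ⟨v, by rw [hu, hv, pow_succ, mul_assoc]⟩
  exact Nat.find_spec hex hfin

/-- Let `(A, m)` be a discrete valuation ring and `(R, n)` a Noetherian local ring, flat and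
local over `A`. If `R/mR` is reduced, then `R ⊗_A Q(A)` is reduced, `Q(A)` the fraction
field of `A`. -/
theorem stmt11 (A R : Type*) [CommRing A] [IsDomain A] [IsDiscreteValuationRing A]
    [CommRing R] [IsNoetherianRing R] [IsLocalRing R] [Algebra A R] [Module.Flat A R]
    [IsLocalHom (algebraMap A R)]
    (hred : IsReduced (R ⧸ Ideal.map (algebraMap A R) (IsLocalRing.maximalIdeal A))) :
    IsReduced (FractionRing A ⊗[A] R) := by
  have hRred : IsReduced R := aux_reduced A R hred
  letI : Algebra R (FractionRing A ⊗[A] R) := Algebra.TensorProduct.rightAlgebra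
  haveI : IsScalarTower A R (FractionRing A ⊗[A] R) :=
    Algebra.TensorProduct.right_isScalarTower
  haveI : IsLocalizedModule (nonZeroDivisors A)
      (IsScalarTower.toAlgHom A R (FractionRing A ⊗[A] R)).toLinearMap := by
    rw [isLocalizedModule_iff_isBaseChange (S := nonZeroDivisors A) (A := FractionRing A)]
    exact TensorProduct.isBaseChange A R (FractionRing A)
  haveI : IsLocalization (Algebra.algebraMapSubmonoid R (nonZeroDivisors A))
      (FractionRing A ⊗[A] R) := isLocalizedModule_iff_isLocalization.mp ‹_›
  exact aux_isReduced_localization (Algebra.algebraMapSubmonoid R (nonZeroDivisors A))
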